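/- Every Dyck path D of semilength n that does not end with a single east step and has at least two returns decomposes uniquely as P Q e m R where R is the maximal suffix of single rises beginning with a rise, Q e m R is a Dyck path with precisely two returns, e is a maximal run of east steps, and m is a maximal run of north steps. -/

import Mathlib

/-!
Dyck paths are encoded as lists of booleans: `true` is a north step `(0,1)`,
`false` is an east step `(1,0)`.  A Dyck path of semilength `n` goes from
`(0,0)` to `(n,n)` staying weakly above the diagonal `y = x`.
-/

/-- `D` is a Dyck word: every prefix has at least as many north steps as east
steps, and the total numbers agree. -/
def isDyck (D : List Bool) : Bool :=
  ((List.range (D.length + 1)).all fun k =>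
    (D.take k).count false ≤ (D.take k).count true) &&
  (D.count true == D.count false)

/-- The (finite) set of Dyck paths of semilength `n`. -/
def dyckPaths (n : ℕ) : Finset (List Bool) :=
  ((List.replicate n true ++ List.replicate n false).permutations.filter isDyck).toFinset

/-- The number of returns: east steps ending on the diagonal `y = x`. -/
def returns (D : List Bool) : ℕ :=
  ((List.range D.length).filter fun i =>
    (D[i]? == some false) &&
    ((D.take (i + 1)).count true == (D.take (i + 1)).count false)).length

/-- `ldr D`: the `y`-coordinate of the midpoint of the last double rise
(last pair of consecutive north steps), `0` if there is no double rise. -/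
def ldr (D : List Bool) : ℕ :=
  match ((List.range D.length).filter fun i =>
      (D[i]? == some true) && (D[i+1]? == some true)).getLast? with
  | some i => (D.take (i + 1)).count true
  | none => 0

/-- The set of `x`-coordinates (plus 1) of the north steps of `D`. -/
def rises (D : List Bool) : Finset ℕ :=
  (((List.range D.length).filter fun i => D[i]? == some true).map
    fun i => (D.take i).count false + 1).toFinset

/-- The multiset of `x`-coordinates (plus 1) of the north steps of `D`. -/
def risesM (D : List Bool) : Multiset ℕ :=
  ↑(((List.range D.length).filter fun i => D[i]? == some true).map
    fun i => (D.take i).count false + 1)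

/-- `D` ends with a single east step: its last maximal run of east steps has
length one, i.e. `D` ends with a north step followed by one east step. -/
def EndsSingleEast (D : List Bool) : Prop :=
  ∃ P, D = P ++ [true, false]

/-- `R` contains only single rises: no two consecutive north steps. -/
def SingleRises (R : List Bool) : Prop :=
  ∀ i, ¬ (R[i]? = some true ∧ R[i+1]? = some true)

/-- A prime Dyck path: a Dyck path whose only return is its final east step. -/
def IsPrimeDyck (Q : List Bool) : Prop :=
  isDyck Q = true ∧ Q ≠ [] ∧ returns Q = 1

/-- Concatenation `n₀ Q₁ n₁ Q₂ ⋯` of runs of north steps and paths, encoded as a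
list of pairs `(nᵢ₋₁, Qᵢ)`. -/
def primeBlocks (l : List (ℕ × List Bool)) : List Bool :=
  (l.map fun p => List.replicate p.1 true ++ p.2).flatten

section Helpers

lemma isDyck_iff {D : List Bool} : isDyck D = true ↔
    (∀ k, (D.take k).count false ≤ (D.take k).count true) ∧
      D.count true = D.count false := by
  simp only [isDyck, Bool.and_eq_true, List.all_eq_true, List.mem_range, beq_iff_eq,
    decide_eq_true_eq, Nat.lt_succ_iff]
  constructor
  · rintro ⟨h1, h2⟩
    refine ⟨fun k => ?_, h2⟩
    rcases le_or_gt k D.length with hk | hk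
    · exact h1 k hk
    · rw [List.take_of_length_le hk.le]; omega
  · rintro ⟨h1, h2⟩; exact ⟨fun k _ => h1 k, h2⟩

lemma returns_nil : returns [] = 0 := rfl

lemma returns_append {A B : List Bool} (hA : A.count true = A.count false) :
    returns (A ++ B) = returns A + returns B := by
  unfold returns
  rw [List.length_append, List.range_add, List.filter_append, List.length_append]
  congr 1
  · apply congrArg List.length
    apply List.filter_congr
    intro i hi
    rw [List.mem_range] at hi
    rw [List.getElem?_append_left hi, List.take_append_of_le_length (by omega)]
  · rw [List.filter_map, List.length_map]
    apply congrArg List.length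
    apply List.filter_congr
    intro j hj
    rw [List.mem_range] at hj
    have h1 : (A ++ B)[A.length + j]? = B[j]? := by
      rw [List.getElem?_append_right (by omega)]
      congr 1
      omega
    have h2 : (A ++ B).take (A.length + j + 1) = A ++ B.take (j + 1) := by
      rw [List.take_append, List.take_of_length_le (by omega)]
      congr 2
      omega
    rw [Bool.eq_iff_iff]
    simp only [Function.comp, Bool.and_eq_true, beq_iff_eq, h1, h2, List.count_append]
    constructor <;> rintro ⟨hx, hy⟩ <;> exact ⟨hx, by omega⟩

lemma prefOK_append_left {A B : List Bool}
    (h : ∀ k, ((A ++ B).take k).count false ≤ ((A ++ B).take k).count true) :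
    ∀ k, (A.take k).count false ≤ (A.take k).count true := by
  intro k
  rcases le_or_gt k A.length with hk | hk
  · have := h k
    rwa [List.take_append_of_le_length hk] at this
  · rw [List.take_of_length_le hk.le]
    have := h A.length
    rwa [List.take_append_of_le_length le_rfl, List.take_length] at this

lemma prefOK_append_right {A B : List Bool}
    (h : ∀ k, ((A ++ B).take k).count false ≤ ((A ++ B).take k).count true)
    (hA : A.count true = A.count false) :
    ∀ k, (B.take k).count false ≤ (B.take k).count true := by
  intro k
  have := h (A.length + k)
  rw [List.take_append, List.take_of_length_le (by omega)] at this
  have hk : A.length + k - A.length = k := by omega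
  rw [hk] at this
  simp only [List.count_append] at this
  omega

lemma isDyck_append_right {A B : List Bool} (h : isDyck (A ++ B) = true)
    (hA : A.count true = A.count false) : isDyck B = true := by
  rw [isDyck_iff] at h ⊢
  obtain ⟨h1, h2⟩ := h
  refine ⟨prefOK_append_right h1 hA, ?_⟩
  simp only [List.count_append] at h2
  omega

lemma dyck_ends_false {M : List Bool} (h : isDyck M = true) (hne : M ≠ []) :
    ∃ M', M = M' ++ [false] := by
  obtain ⟨M', c, rfl⟩ := (List.eq_nil_or_concat M).resolve_left hne
  rw [List.concat_eq_append] at *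
  cases c
  · exact ⟨M', rfl⟩
  · exfalso
    rw [isDyck_iff] at h
    obtain ⟨h1, h2⟩ := h
    have := h1 M'.length
    rw [List.take_append_of_le_length le_rfl, List.take_length] at this
    simp only [List.count_append, List.count_singleton] at h2
    simp at h2
    omega

lemma dyck_starts_true {M : List Bool} (h : isDyck M = true) (hne : M ≠ []) :
    ∃ M', M = true :: M' := by
  cases M with
  | nil => exact absurd rfl hne
  | cons c M' =>
    cases c
    · exfalso
      rw [isDyck_iff] at h
      have := h.1 1
      simp [List.take_succ] at this
    · exact ⟨M', rfl⟩

lemma returns_pos {M : List Bool} (h : isDyck M = true) (hne : M ≠ []) :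
    1 ≤ returns M := by
  have hlen : 0 < M.length := List.length_pos_iff.mpr hne
  obtain ⟨M', hM'⟩ := dyck_ends_false h hne
  rw [returns]
  have hmem : M.length - 1 ∈ (List.range M.length).filter fun i =>
      (M[i]? == some false) &&
      ((M.take (i + 1)).count true == (M.take (i + 1)).count false) := by
    rw [List.mem_filter, List.mem_range]
    refine ⟨by omega, ?_⟩
    have hlast : M[M.length - 1]? = some false := by
      subst hM'
      rw [List.getElem?_append_right (by simp)]
      simp
    have htake : M.take (M.length - 1 + 1) = M := by
      apply List.take_of_length_le
      omega
    rw [hlast, htake]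
    simp [(isDyck_iff.mp h).2]
  have := List.length_pos_iff.mpr (List.ne_nil_of_mem hmem)
  omega

end Helpers
section Helpers2

lemma exists_first_return_split {M : List Bool} (h : isDyck M = true) (hr : 1 ≤ returns M) :
    ∃ A B, M = A ++ B ∧ A ≠ [] ∧ isDyck A = true ∧ returns A = 1 ∧ isDyck B = true ∧
      returns B + 1 = returns M := by
  have hex : ∃ i, M[i]? = some false ∧
      (M.take (i + 1)).count true = (M.take (i + 1)).count false := by
    have hne : ((List.range M.length).filter fun i =>
        (M[i]? == some false) &&
        ((M.take (i + 1)).count true == (M.take (i + 1)).count false)) ≠ [] := by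
      intro hcon
      rw [returns, hcon] at hr
      simp at hr
    obtain ⟨i, hi⟩ := List.exists_mem_of_ne_nil _ hne
    rw [List.mem_filter] at hi
    simp only [Bool.and_eq_true, beq_iff_eq] at hi
    exact ⟨i, hi.2⟩
  classical
  set i0 := Nat.find hex with hi0def
  obtain ⟨hfal, hbal⟩ := Nat.find_spec hex
  have hi0len : i0 < M.length := by
    by_contra hcon
    rw [List.getElem?_eq_none (by omega)] at hfal
    simp at hfal
  have hpref := (isDyck_iff.mp h).1
  have hAlen : (M.take (i0 + 1)).length = i0 + 1 := by
    rw [List.length_take]; omega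
  have hAne : M.take (i0 + 1) ≠ [] := by
    intro hcon
    rw [hcon] at hAlen
    simp at hAlen
  have hAdy : isDyck (M.take (i0 + 1)) = true := by
    rw [isDyck_iff]
    exact ⟨fun k => by rw [List.take_take]; exact hpref _, hbal⟩
  have hretA : returns (M.take (i0 + 1)) = 1 := by
    rw [returns, hAlen, List.range_succ, List.filter_append]
    have hnil : (List.range i0).filter (fun i =>
        ((M.take (i0 + 1))[i]? == some false) &&
        (((M.take (i0 + 1)).take (i + 1)).count true ==
          ((M.take (i0 + 1)).take (i + 1)).count false)) = [] := by
      rw [List.filter_eq_nil_iff]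
      intro j hj
      rw [List.mem_range] at hj
      rw [List.getElem?_take, if_pos (by omega), List.take_take, min_eq_left (by omega)]
      simp only [Bool.and_eq_true, beq_iff_eq, not_and]
      intro h1 h2
      exact Nat.find_min hex hj ⟨h1, h2⟩
    rw [hnil]
    have hsingle : (((M.take (i0 + 1))[i0]? == some false) &&
        (((M.take (i0 + 1)).take (i0 + 1)).count true ==
          ((M.take (i0 + 1)).take (i0 + 1)).count false)) = true := by
      rw [List.getElem?_take, if_pos (by omega), List.take_take, min_self]
      simp [hi0def, hfal, hbal]
    rw [List.filter_cons, if_pos hsingle]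
    simp
  have hsplit := returns_append (A := M.take (i0 + 1)) (B := M.drop (i0 + 1)) hbal
  rw [List.take_append_drop] at hsplit
  refine ⟨M.take (i0 + 1), M.drop (i0 + 1), (List.take_append_drop _ _).symm, hAne, hAdy,
    hretA, ?_, by omega⟩
  apply isDyck_append_right (A := M.take (i0 + 1))
  · rwa [List.take_append_drop]
  · exact hbal

lemma exists_two_return_suffix (M : List Bool) (h : isDyck M = true) (hr : 2 ≤ returns M) :
    ∃ P S, M = P ++ S ∧ isDyck S = true ∧ returns S = 2 := by
  by_cases h2 : returns M = 2
  · exact ⟨[], M, rfl, h, h2⟩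
  · obtain ⟨A, B, hM, hAne, hA, hrA, hB, hrB⟩ := exists_first_return_split h (by omega)
    have hlt : B.length < M.length := by
      rw [hM, List.length_append]
      have := List.length_pos_iff.mpr hAne
      omega
    obtain ⟨P, S, hBeq, hS, hrS⟩ := exists_two_return_suffix B hB (by omega)
    exact ⟨A ++ P, S, by rw [hM, hBeq, List.append_assoc], hS, hrS⟩
termination_by M.length
decreasing_by exact hlt

lemma two_return_suffix_unique {P₁ P₂ S₁ S₂ : List Bool}
    (he : P₁ ++ S₁ = P₂ ++ S₂) (h1 : isDyck S₁ = true) (h2 : isDyck S₂ = true)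
    (hr1 : returns S₁ = 2) (hr2 : returns S₂ = 2) : S₁ = S₂ := by
  wlog hle : S₁.length ≤ S₂.length generalizing P₁ P₂ S₁ S₂
  · exact (this he.symm h2 h1 hr2 hr1 (by omega)).symm
  rcases List.append_eq_append_iff.mp he with ⟨a', ha1, ha2⟩ | ⟨c', hc1, hc2⟩
  · -- S₁ = a' ++ S₂
    have hlen := congrArg List.length ha2
    rw [List.length_append] at hlen
    have : a' = [] := by
      apply List.eq_nil_of_length_eq_zero
      omega
    rw [ha2, this, List.nil_append]
  · -- S₂ = c' ++ S₁
    have hbal1 := (isDyck_iff.mp h1).2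
    have hbal2 := (isDyck_iff.mp h2).2
    have hbalc : c'.count true = c'.count false := by
      rw [hc2, List.count_append, List.count_append] at hbal2
      omega
    have hcd : isDyck c' = true := by
      rw [isDyck_iff]
      refine ⟨?_, hbalc⟩
      apply prefOK_append_left (B := S₁)
      rw [← hc2]
      exact (isDyck_iff.mp h2).1
    have hrsplit : returns S₂ = returns c' + returns S₁ := by
      rw [hc2, returns_append hbalc]
    have hc0 : returns c' = 0 := by omega
    have : c' = [] := by
      by_contra hcon
      have := returns_pos hcd hcon
      omega
    rw [hc2, this, List.nil_append]

lemma singleRises_height_le {U : List Bool} (hs : SingleRises U)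
    (hp : ∀ k, (U.take k).count false ≤ (U.take k).count true) :
    ∀ k, (U.take k).count true ≤ (U.take k).count false + 1 := by
  intro k
  induction k using Nat.strong_induction_on with
  | _ k ih =>
    match k with
    | 0 => simp
    | (j + 1) =>
      rw [List.take_succ]
      cases hU : U[j]? with
      | none => simp only [Option.toList, List.append_nil]; exact ih j (by omega)
      | some c =>
        cases c
        · simp only [Option.toList, List.count_append, List.count_singleton]
          have := ih j (by omega)
          simp
          omega
        · simp only [Option.toList, List.count_append, List.count_singleton]
          simp only [beq_self_eq_true, if_true]
          have hkey : (U.take j).count true ≤ (U.take j).count false := by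
            match j with
            | 0 => simp
            | (i + 1) =>
              have hUi : U[i]? = some false := by
                cases hUi' : U[i]? with
                | none =>
                  exfalso
                  have hle : U.length ≤ i := by
                    by_contra hcon
                    push_neg at hcon
                    rw [List.getElem?_eq_getElem (by omega)] at hUi'
                    simp at hUi'
                  rw [List.getElem?_eq_none (by omega)] at hU
                  simp at hU
                | some c' =>
                  cases c'
                  · rfl
                  · exact absurd ⟨hUi', hU⟩ (hs i)
              have hij := ih i (by omega)
              rw [List.take_succ, hUi]
              simp only [Option.toList, List.count_append, List.count_singleton]
              simp
              omega
          simp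
          omega

lemma exists_double_rise {S : List Bool} (h : isDyck S = true) (hr : returns S = 2)
    (hff : ∃ S₀, S = S₀ ++ [false, false]) :
    ∃ j, S[j]? = some true ∧ S[j+1]? = some true := by
  by_contra hcon
  push_neg at hcon
  have hs : SingleRises S := by
    intro i hi
    exact hcon i hi.1 hi.2
  obtain ⟨S₀, rfl⟩ := hff
  have hbound := singleRises_height_le hs (isDyck_iff.mp h).1 S₀.length
  rw [List.take_append_of_le_length le_rfl, List.take_length] at hbound
  have hbal := (isDyck_iff.mp h).2
  simp only [List.count_append] at hbal
  have c1 : List.count true [false, false] = 0 := by decide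
  have c2 : List.count false [false, false] = 2 := by decide
  rw [c1, c2] at hbal
  omega

end Helpers2
section Helpers3

lemma takeWhile_rep_append {p : Bool → Bool} {a : Bool} (hpa : p a = true) (m : ℕ)
    (l : List Bool) :
    (List.replicate m a ++ l).takeWhile p = List.replicate m a ++ l.takeWhile p ∧
    (List.replicate m a ++ l).dropWhile p = l.dropWhile p := by
  induction m with
  | zero => simp
  | succ m ih =>
    simp [List.replicate_succ, List.takeWhile_cons, List.dropWhile_cons, hpa, ih.1, ih.2]

lemma head_dropWhile_false {p : Bool → Bool} {l : List Bool} {b : Bool}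
    (h : (l.dropWhile p).head? = some b) : p b = false := by
  have := List.head?_dropWhile_not p l
  rw [h] at this
  exact this

lemma takeWhile_eq_nil_of_head {p : Bool → Bool} {l : List Bool}
    (h : ∀ b, l.head? = some b → p b = false) : l.takeWhile p = [] := by
  cases l with
  | nil => rfl
  | cons a t =>
    have := h a rfl
    simp [List.takeWhile_cons, this]

lemma dropWhile_eq_self_of_head {p : Bool → Bool} {l : List Bool}
    (h : ∀ b, l.head? = some b → p b = false) : l.dropWhile p = l := by
  cases l with
  | nil => rfl
  | cons a t =>
    have := h a rfl
    simp [List.dropWhile_cons, this]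

lemma trailing_run_unique {a : Bool} {m₁ m₂ : ℕ} {l₁ l₂ : List Bool}
    (h : List.replicate m₁ a ++ l₁ = List.replicate m₂ a ++ l₂)
    (h1 : l₁.head? ≠ some a) (h2 : l₂.head? ≠ some a) : m₁ = m₂ ∧ l₁ = l₂ := by
  have hpa : ((· == a) : Bool → Bool) a = true := by simp
  have hhead : ∀ (l : List Bool), l.head? ≠ some a → ∀ b, l.head? = some b → (b == a) = false := by
    intro l hl b hb
    rw [hb] at hl
    simp only [beq_eq_false_iff_ne, ne_eq]
    intro hcon
    exact hl (by rw [hcon])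
  have e1t := (takeWhile_rep_append (p := (· == a)) hpa m₁ l₁).1
  have e2t := (takeWhile_rep_append (p := (· == a)) hpa m₂ l₂).1
  have e1d := (takeWhile_rep_append (p := (· == a)) hpa m₁ l₁).2
  have e2d := (takeWhile_rep_append (p := (· == a)) hpa m₂ l₂).2
  rw [takeWhile_eq_nil_of_head (hhead l₁ h1), List.append_nil] at e1t
  rw [takeWhile_eq_nil_of_head (hhead l₂ h2), List.append_nil] at e2t
  rw [dropWhile_eq_self_of_head (hhead l₁ h1)] at e1d
  rw [dropWhile_eq_self_of_head (hhead l₂ h2)] at e2d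
  have ht : List.replicate m₁ a = List.replicate m₂ a := by rw [← e1t, ← e2t, h]
  have hm : m₁ = m₂ := by
    have := congrArg List.length ht
    simpa using this
  have hl : l₁ = l₂ := by rw [← e1d, ← e2d, h]
  exact ⟨hm, hl⟩

lemma exists_trailing_runs {T : List Bool} (hT : T.getLast? = some true)
    (hne : ∃ i : ℕ, T[i]? = some false) :
    ∃ Q e m, T = Q ++ List.replicate e false ++ List.replicate m true ∧ 1 ≤ e ∧ 1 ≤ m ∧
      Q.getLast? ≠ some false := by
  set r := T.reverse with hr
  have hrhead : r.head? = some true := by rw [hr, List.head?_reverse, hT]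
  set t1 := r.takeWhile (· == true) with ht1
  set d1 := r.dropWhile (· == true) with hd1
  have hrsplit : t1 ++ d1 = r := List.takeWhile_append_dropWhile
  have ht1rep : t1 = List.replicate t1.length true := by
    apply List.eq_replicate_of_mem
    intro b hb
    have := List.mem_takeWhile_imp hb
    simpa using this
  have ht1len : 1 ≤ t1.length := by
    cases hrc : r with
    | nil => rw [hrc] at hrhead; simp at hrhead
    | cons c r' =>
      rw [hrc] at hrhead
      have hc : c = true := by simpa using hrhead
      rw [ht1, hrc, hc, List.takeWhile_cons]
      simp
  have hd1ne : d1 ≠ [] := by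
    intro hcon
    rw [hcon, List.append_nil] at hrsplit
    obtain ⟨i, hi⟩ := hne
    have hTrep : T = List.replicate t1.length true := by
      have : r = List.replicate t1.length true := by rw [← hrsplit, ← ht1rep]
      have := congrArg List.reverse this
      rw [hr] at this
      simpa [List.reverse_replicate] using this
    have hmem : false ∈ T := List.mem_of_getElem? hi
    rw [hTrep] at hmem
    exact Bool.noConfusion (List.eq_of_mem_replicate hmem)
  obtain ⟨b, d2, hbd⟩ := List.exists_cons_of_ne_nil hd1ne
  have hbfalse : b = false := by
    have : (b == true) = false := by
      apply head_dropWhile_false (p := (· == true)) (l := r)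
      rw [← hd1, hbd]
      rfl
    simpa using this
  set t2 := d1.takeWhile (· == false) with ht2
  set d3 := d1.dropWhile (· == false) with hd3
  have hd1split : t2 ++ d3 = d1 := List.takeWhile_append_dropWhile
  have ht2rep : t2 = List.replicate t2.length false := by
    apply List.eq_replicate_of_mem
    intro c hc
    have := List.mem_takeWhile_imp hc
    simpa using this
  have ht2len : 1 ≤ t2.length := by
    rw [ht2, hbd, hbfalse, List.takeWhile_cons]
    simp
  have hd3head : d3.head? ≠ some false := by
    intro hcon
    have := head_dropWhile_false (p := (· == false)) (l := d1) hcon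
    simp at this
  refine ⟨d3.reverse, t2.length, t1.length, ?_, ht2len, ht1len, ?_⟩
  · have hTr : T = (t1 ++ t2 ++ d3).reverse := by
      rw [List.append_assoc, hd1split, hrsplit, hr, List.reverse_reverse]
    have h1r : t1.reverse = List.replicate t1.length true := by
      conv_lhs => rw [ht1rep]
      rw [List.reverse_replicate]
    have h2r : t2.reverse = List.replicate t2.length false := by
      conv_lhs => rw [ht2rep]
      rw [List.reverse_replicate]
    rw [hTr, List.reverse_append, List.reverse_append, h2r, h1r, List.append_assoc]
  · rw [List.getLast?_reverse]
    exact hd3head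

end Helpers3
/-- Every Dyck path of semilength `n` not ending with a single east step with
at least two returns decomposes uniquely as `P Q e m R` where `R` is the
maximal suffix of single rises beginning with a rise, `Q e m R` is a Dyck path
with precisely two returns, `e` is a maximal run of east steps and `m` a
maximal run of north steps. -/
theorem stmt10 (n : ℕ) (D : List Bool) (hD : D ∈ dyckPaths n)
    (h1 : ¬ EndsSingleEast D) (h2 : 2 ≤ returns D) :
    ∃! t : List Bool × List Bool × ℕ × ℕ × List Bool,
      D = t.1 ++ t.2.1 ++ List.replicate t.2.2.1 false ++
        List.replicate t.2.2.2.1 true ++ t.2.2.2.2 ∧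
      1 ≤ t.2.2.1 ∧ 1 ≤ t.2.2.2.1 ∧
      t.2.1.getLast? ≠ some false ∧
      SingleRises t.2.2.2.2 ∧
      (t.2.2.2.2 = [] ∨ t.2.2.2.2.head? = some true) ∧
      isDyck (t.2.1 ++ List.replicate t.2.2.1 false ++
        List.replicate t.2.2.2.1 true ++ t.2.2.2.2) = true ∧
      returns (t.2.1 ++ List.replicate t.2.2.1 false ++
        List.replicate t.2.2.2.1 true ++ t.2.2.2.2) = 2 ∧
      (∀ P' Q' : List Bool, ∀ e' m' : ℕ, ∀ R' : List Bool,
        D = P' ++ Q' ++ List.replicate e' false ++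
          List.replicate m' true ++ R' →
        1 ≤ e' → 1 ≤ m' → Q'.getLast? ≠ some false → SingleRises R' →
        (R' = [] ∨ R'.head? = some true) →
        isDyck (Q' ++ List.replicate e' false ++
          List.replicate m' true ++ R') = true →
        returns (Q' ++ List.replicate e' false ++
          List.replicate m' true ++ R') = 2 →
        R'.length ≤ t.2.2.2.2.length) := by
  classical
  have hDd : isDyck D = true := by
    simp only [dyckPaths, List.mem_toFinset, List.mem_filter] at hD
    exact hD.2
  obtain ⟨P, S, hPS, hS, hrS⟩ := exists_two_return_suffix D hDd h2
  have hSne : S ≠ [] := by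
    intro hcon
    rw [hcon, returns_nil] at hrS
    omega
  obtain ⟨S₁, hS₁⟩ := dyck_ends_false hS hSne
  have hS₁ne : S₁ ≠ [] := by
    intro hcon
    rw [hcon, List.nil_append] at hS₁
    rw [hS₁] at hS
    exact absurd hS (by decide)
  obtain ⟨S₀', c, hS₀⟩ := (List.eq_nil_or_concat S₁).resolve_left hS₁ne
  rw [List.concat_eq_append] at hS₀
  have hcfalse : c = false := by
    cases c
    · rfl
    · exfalso
      apply h1
      refine ⟨P ++ S₀', ?_⟩
      rw [hPS, hS₁, hS₀]
      simp [List.append_assoc]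
  have hff : ∃ S₀, S = S₀ ++ [false, false] := by
    refine ⟨S₀', ?_⟩
    rw [hS₁, hS₀, hcfalse]
    simp
  obtain ⟨j₀, hj₀1, hj₀2⟩ := exists_double_rise hS hrS hff
  have hj₀lt : j₀ < S.length := by
    by_contra hcon
    rw [List.getElem?_eq_none (by omega)] at hj₀1
    simp at hj₀1
  set Pdr : ℕ → Prop := fun j => S[j]? = some true ∧ S[j+1]? = some true with hPdrdef
  set J := Nat.findGreatest Pdr S.length with hJdef
  have hPJ : Pdr J := Nat.findGreatest_spec (le_of_lt hj₀lt) ⟨hj₀1, hj₀2⟩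
  have hJlt : J < S.length := by
    by_contra hcon
    have := hPJ.1
    rw [List.getElem?_eq_none (by omega)] at this
    simp at this
  obtain ⟨A, B, hAB, hAne, hA, hrA, hB, hrB⟩ := exists_first_return_split hS (by omega)
  obtain ⟨A₀, hA₀⟩ := dyck_ends_false hA hAne
  have hBne : B ≠ [] := by
    intro hcon
    rw [hcon, returns_nil] at hrB
    omega
  obtain ⟨B', hB'⟩ := dyck_starts_true hB hBne
  have hB2 : ∃ B'', B = true :: true :: B'' := by
    cases hBB : B' with
    | nil =>
      exfalso
      rw [hBB] at hB'
      rw [hB'] at hB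
      exact absurd hB (by decide)
    | cons c B'' =>
      cases c
      · exfalso
        have hBeq : B = [true, false] ++ B'' := by rw [hB', hBB]; rfl
        have hbal : List.count true [true, false] = List.count false [true, false] := by decide
        have hBd : isDyck B'' = true := by
          apply isDyck_append_right (A := [true, false])
          · rw [← hBeq]; exact hB
          · exact hbal
        have hrsp := returns_append (A := [true, false]) (B := B'') hbal
        rw [← hBeq] at hrsp
        have hr2 : returns [true, false] = 1 := by decide
        rw [hr2] at hrsp
        have hB''nil : B'' = [] := by
          by_contra hcon
          have := returns_pos hBd hcon
          omega
        apply h1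
        refine ⟨P ++ A, ?_⟩
        rw [hPS, hAB, hBeq, hB''nil]
        simp [List.append_assoc]
      · exact ⟨B'', by rw [hB', hBB]⟩
  obtain ⟨B'', hB''⟩ := hB2
  have hApos : 1 ≤ A.length := List.length_pos_iff.mpr hAne
  have hdrA : Pdr A.length := by
    constructor
    · rw [hAB, List.getElem?_append_right le_rfl, Nat.sub_self, hB'']
      simp
    · rw [hAB, List.getElem?_append_right (by omega), hB'']
      have h1' : A.length + 1 - A.length = 1 := by omega
      rw [h1']
      simp
  have hALlen : A.length ≤ S.length := by
    rw [hAB, List.length_append]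
    omega
  have hJA : A.length ≤ J := Nat.le_findGreatest hALlen hdrA
  set T := S.take (J + 1) with hT
  set R := S.drop (J + 1) with hR
  have hTlen : T.length = J + 1 := by
    rw [hT, List.length_take]
    omega
  have hTR : T ++ R = S := List.take_append_drop _ _
  have hTlast : T.getLast? = some true := by
    rw [List.getLast?_eq_getElem?, hTlen]
    simp only [Nat.add_sub_cancel]
    rw [hT, List.getElem?_take, if_pos (by omega)]
    exact hPJ.1
  have hSAf : S[A.length - 1]? = some false := by
    rw [hAB, List.getElem?_append_left (by omega), hA₀,
      List.getElem?_append_right (by simp)]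
    simp
  have hTfalse : ∃ i : ℕ, T[i]? = some false := by
    refine ⟨A.length - 1, ?_⟩
    rw [hT, List.getElem?_take, if_pos (by omega)]
    exact hSAf
  obtain ⟨Q, e, m, hTQ, he, hm, hQl⟩ := exists_trailing_runs hTlast hTfalse
  have hSfull : Q ++ List.replicate e false ++ List.replicate m true ++ R = S := by
    rw [← hTR, hTQ]
  have hRhead : R.head? = some true := by
    rw [hR, List.head?_drop]
    exact hPJ.2
  have hRsr : SingleRises R := by
    intro i hi
    obtain ⟨ha, hb⟩ := hi
    rw [hR, List.getElem?_drop] at ha hb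
    have harr : J + 1 + (i + 1) = (J + 1 + i) + 1 := by omega
    rw [harr] at hb
    have hbd : J + 1 + i ≤ S.length := by
      by_contra hcon
      rw [List.getElem?_eq_none (by omega)] at ha
      simp at ha
    have hng := Nat.findGreatest_is_greatest (P := Pdr) (n := S.length) (k := J + 1 + i)
      (by omega) hbd
    exact hng ⟨ha, hb⟩
  have hRlen : R.length = S.length - (J + 1) := by
    rw [hR, List.length_drop]
  have hSd2 : isDyck (Q ++ List.replicate e false ++ List.replicate m true ++ R) = true := by
    rw [hSfull]; exact hS
  have hSr2 : returns (Q ++ List.replicate e false ++ List.replicate m true ++ R) = 2 := by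
    rw [hSfull]; exact hrS
  have hDeq : D = P ++ Q ++ List.replicate e false ++ List.replicate m true ++ R := by
    rw [hPS, ← hSfull]
    simp [List.append_assoc]
  have hmax : ∀ (P' Q' : List Bool) (e' m' : ℕ) (R' : List Bool),
      D = P' ++ Q' ++ List.replicate e' false ++ List.replicate m' true ++ R' →
      1 ≤ e' → 1 ≤ m' → Q'.getLast? ≠ some false → SingleRises R' →
      (R' = [] ∨ R'.head? = some true) →
      isDyck (Q' ++ List.replicate e' false ++ List.replicate m' true ++ R') = true →
      returns (Q' ++ List.replicate e' false ++ List.replicate m' true ++ R') = 2 →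
      R'.length ≤ R.length := by
    intro P' Q' e' m' R' hD' he' hm' hQ' hsr' hh' hd' hr'
    have heq : P' ++ (Q' ++ List.replicate e' false ++ List.replicate m' true ++ R') =
        P ++ S := by
      rw [← hPS, hD']
      simp [List.append_assoc]
    have hSS : Q' ++ List.replicate e' false ++ List.replicate m' true ++ R' = S :=
      two_return_suffix_unique heq hd' hS hr' hrS
    set W' := Q' ++ List.replicate e' false ++ List.replicate m' true with hW'
    have hWR : W' ++ R' = S := hSS
    have hlenW : W'.length + R'.length = S.length := by
      rw [← List.length_append, hWR]
    by_contra hcon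
    push_neg at hcon
    have hsle : W'.length ≤ J := by omega
    have hR'drop : R' = S.drop W'.length := by
      rw [← hWR, List.drop_left]
    have ha : R'[J - W'.length]? = some true := by
      rw [hR'drop, List.getElem?_drop]
      have harr : W'.length + (J - W'.length) = J := by omega
      rw [harr]
      exact hPJ.1
    have hb : R'[(J - W'.length) + 1]? = some true := by
      rw [hR'drop, List.getElem?_drop]
      have harr : W'.length + (J - W'.length + 1) = J + 1 := by omega
      rw [harr]
      exact hPJ.2
    exact hsr' (J - W'.length) ⟨ha, hb⟩
  refine ⟨(P, Q, e, m, R), ⟨hDeq, he, hm, hQl, hRsr, Or.inr hRhead, hSd2, hSr2, hmax⟩, ?_⟩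
  rintro ⟨P', Q', e', m', R'⟩ ⟨hy1, hy2, hy3, hy4, hy5, hy6, hy7, hy8, hy9⟩
  have hy2' : 1 ≤ e' := hy2
  have hy3' : 1 ≤ m' := hy3
  have hle1 : R'.length ≤ R.length := hmax P' Q' e' m' R' hy1 hy2 hy3 hy4 hy5 hy6 hy7 hy8
  have hle2 : R.length ≤ R'.length := hy9 P Q e m R hDeq he hm hQl hRsr (Or.inr hRhead) hSd2 hSr2
  have hRlen' : R'.length = R.length := le_antisymm hle1 hle2
  have heq : P' ++ (Q' ++ List.replicate e' false ++ List.replicate m' true ++ R') =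
      P ++ S := by
    rw [← hPS, hy1]
    simp [List.append_assoc]
  have hSS : Q' ++ List.replicate e' false ++ List.replicate m' true ++ R' = S :=
    two_return_suffix_unique heq hy7 hS hy8 hrS
  have hlenW' : (Q' ++ List.replicate e' false ++ List.replicate m' true).length + R'.length
      = S.length := by
    rw [← List.length_append, hSS]
  have hlenW : (Q ++ List.replicate e false ++ List.replicate m true).length + R.length
      = S.length := by
    rw [← List.length_append, hSfull]
  have hWlen : (Q' ++ List.replicate e' false ++ List.replicate m' true).length
      = (Q ++ List.replicate e false ++ List.replicate m true).length := by omega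
  have hR'eq : R' = R := by
    have hd1 : R' = S.drop (Q' ++ List.replicate e' false ++ List.replicate m' true).length := by
      rw [← hSS, List.drop_left]
    have hd2 : R = S.drop (Q ++ List.replicate e false ++ List.replicate m true).length := by
      rw [← hSfull, List.drop_left]
    rw [hd1, hd2, hWlen]
  have hWeq : Q' ++ List.replicate e' false ++ List.replicate m' true
      = Q ++ List.replicate e false ++ List.replicate m true := by
    apply List.append_cancel_right (bs := R)
    rw [hSfull, ← hR'eq]
    exact hSS
  have hrev : List.replicate m' true ++ (List.replicate e' false ++ Q'.reverse)
      = List.replicate m true ++ (List.replicate e false ++ Q.reverse) := by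
    have := congrArg List.reverse hWeq
    simpa [List.reverse_append, List.reverse_replicate, List.append_assoc] using this
  have hhead1 : (List.replicate e' false ++ Q'.reverse).head? ≠ some true := by
    obtain ⟨e₁, rfl⟩ : ∃ e₁, e' = e₁ + 1 := ⟨e' - 1, by omega⟩
    rw [List.replicate_succ]
    simp
  have hhead2 : (List.replicate e false ++ Q.reverse).head? ≠ some true := by
    obtain ⟨e₁, rfl⟩ : ∃ e₁, e = e₁ + 1 := ⟨e - 1, by omega⟩
    rw [List.replicate_succ]
    simp
  obtain ⟨hm'm, hrest⟩ := trailing_run_unique hrev hhead1 hhead2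
  have hhead3 : Q'.reverse.head? ≠ some false := by
    rw [List.head?_reverse]
    exact hy4
  have hhead4 : Q.reverse.head? ≠ some false := by
    rw [List.head?_reverse]
    exact hQl
  obtain ⟨he'e, hQrev⟩ := trailing_run_unique hrest hhead3 hhead4
  have hQeq : Q' = Q := List.reverse_injective hQrev
  have hPeq : P' = P := by
    apply List.append_cancel_right (bs := S)
    rw [← heq, hQeq, he'e, hm'm, hR'eq, hSfull]
  rw [Prod.mk.injEq]
  refine ⟨hPeq, ?_⟩
  rw [Prod.mk.injEq]
  refine ⟨hQeq, ?_⟩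
  rw [Prod.mk.injEq]
  refine ⟨he'e, ?_⟩
  rw [Prod.mk.injEq]
  exact ⟨hm'm, hR'eq⟩
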